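/- Let (S, Σ) be a measurable space and κ a Markov kernel from S to S. If there exists an irreducibility measure φ for κ, then there exists a measure ψ on (S, Σ) such that: (1) ψ is an irreducibility measure for κ; (2) a measure μ on (S, Σ) is an irreducibility measure for κ if and only if μ is absolutely continuous with respect to ψ; and (3) for every measurable set A with ψ(A) = 0, the set {x ∈ S : ∃ n ≥ 1, κⁿ(x, A) > 0} has ψ-measure zero. -/

import Mathlib

open MeasureTheory ProbabilityTheory

/-- The n-fold composition of a kernel with itself (n-step transition kernel);
`kpow κ 0` is the identity kernel and `kpow κ (n+1) = κ ∘ₖ kpow κ n`. -/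
noncomputable def kpow {S : Type*} [MeasurableSpace S] (κ : Kernel S S) : ℕ → Kernel S S
  | 0 => Kernel.id
  | n + 1 => κ ∘ₖ kpow κ n

/-- A measure `φ` is an irreducibility measure for the kernel `κ` if for every
measurable set `A` with `φ A > 0` and every `x`, there is `n ≥ 1` with `κⁿ(x, A) > 0`. -/
def IsIrreducibilityMeasure {S : Type*} [MeasurableSpace S] (κ : Kernel S S)
    (φ : Measure S) : Prop :=
  ∀ A : Set S, MeasurableSet A → 0 < φ A → ∀ x : S, ∃ n : ℕ, 1 ≤ n ∧ 0 < kpow κ n x A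

lemma kpow_add {S : Type*} [MeasurableSpace S] (κ : Kernel S S) [IsMarkovKernel κ]
    (m n : ℕ) : kpow κ (m + n) = kpow κ m ∘ₖ kpow κ n := by
  induction m with
  | zero => simp [kpow, Kernel.id_comp]
  | succ m ih =>
    have : m + 1 + n = (m + n) + 1 := by omega
    rw [this]
    show κ ∘ₖ kpow κ (m + n) = (κ ∘ₖ kpow κ m) ∘ₖ kpow κ n
    rw [ih, Kernel.comp_assoc]

lemma kpow_coe_measurable {S : Type*} [MeasurableSpace S] (κ : Kernel S S)
    (n : ℕ) {A : Set S} (hA : MeasurableSet A) :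
    Measurable fun x => kpow κ n x A :=
  Kernel.measurable_coe _ hA

/-- If from `x` the chain reaches `B` in `m` steps with positive probability, and every point
of `B` reaches `A`, then `x` reaches `A` in at least `m` steps. -/
lemma reach_trans {S : Type*} [MeasurableSpace S] (κ : Kernel S S) [IsMarkovKernel κ]
    {A B : Set S} (hA : MeasurableSet A) {x : S} {m : ℕ}
    (hm : 0 < kpow κ m x B)
    (hB : ∀ y ∈ B, ∃ n : ℕ, 0 < kpow κ n y A) :
    ∃ n : ℕ, m ≤ n ∧ 0 < kpow κ n x A := by
  set g : S → ENNReal := fun y => ∑' n : ℕ, kpow κ n y A with hg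
  have hgm : Measurable g :=
    Measurable.ennreal_tsum fun n => kpow_coe_measurable κ n hA
  have hpos : 0 < ∫⁻ y, g y ∂(kpow κ m x) := by
    rw [lintegral_pos_iff_support hgm]
    refine lt_of_lt_of_le hm (measure_mono ?_)
    intro y hy
    obtain ⟨n, hn⟩ := hB y hy
    simp only [Function.mem_support, hg]
    intro h
    rw [ENNReal.tsum_eq_zero] at h
    exact hn.ne' (h n)
  rw [hg] at hpos
  rw [lintegral_tsum (fun n => (kpow_coe_measurable κ n hA).aemeasurable)] at hpos
  have hex : ∃ n : ℕ, 0 < ∫⁻ y, kpow κ n y A ∂(kpow κ m x) := by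
    by_contra h
    push_neg at h
    refine hpos.ne' (ENNReal.tsum_eq_zero.mpr fun n => le_antisymm (h n) (zero_le))
  obtain ⟨n, hn⟩ := hex
  refine ⟨n + m, Nat.le_add_left _ _, ?_⟩
  rwa [kpow_add κ n m, Kernel.comp_apply' _ _ _ hA]

theorem exists_maximal_irreducibility_measure
    {S : Type*} [MeasurableSpace S] (κ : Kernel S S) [IsMarkovKernel κ]
    (φ : Measure S) (hφ : IsIrreducibilityMeasure κ φ) :
    ∃ ψ : Measure S,
      IsIrreducibilityMeasure κ ψ ∧
      (∀ μ : Measure S, IsIrreducibilityMeasure κ μ ↔ μ ≪ ψ) ∧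
      (∀ A : Set S, MeasurableSet A → ψ A = 0 →
        ψ {x : S | ∃ n : ℕ, 1 ≤ n ∧ 0 < kpow κ n x A} = 0) := by
  by_cases hS : ∃ φ₀ : Measure S, IsIrreducibilityMeasure κ φ₀ ∧ φ₀ ≠ 0
  · obtain ⟨φ₀, hφ₀, hne₀⟩ := hS
    -- ψ = ∑ₙ φ₀ ∘ κⁿ
    set ψ : Measure S := Measure.sum (fun n : ℕ => φ₀.bind (fun x => kpow κ n x)) with hψdef
    have hψ_apply : ∀ {A : Set S}, MeasurableSet A →
        ψ A = ∑' n : ℕ, ∫⁻ x, kpow κ n x A ∂φ₀ := by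
      intro A hA
      rw [hψdef, Measure.sum_apply _ hA]
      congr 1
      ext n
      exact Measure.bind_apply hA (kpow κ n).measurable.aemeasurable
    -- ψ A > 0 iff φ₀-positive set of points reach A (possibly in 0 steps)
    have hψ_pos : ∀ {A : Set S}, MeasurableSet A → 0 < ψ A →
        0 < φ₀ {x : S | ∃ n : ℕ, 0 < kpow κ n x A} := by
      intro A hA h
      rw [hψ_apply hA] at h
      have hex : ∃ n : ℕ, 0 < ∫⁻ x, kpow κ n x A ∂φ₀ := by
        by_contra hc
        push_neg at hc
        exact h.ne' (ENNReal.tsum_eq_zero.mpr fun n => le_antisymm (hc n) (zero_le))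
      obtain ⟨n, hn⟩ := hex
      rw [lintegral_pos_iff_support (kpow_coe_measurable κ n hA)] at hn
      refine lt_of_lt_of_le hn (measure_mono ?_)
      intro x hx
      exact ⟨n, pos_iff_ne_zero.mpr hx⟩
    -- ψ A = 0 gives a point from which A is never reached
    have hψ_zero : ∀ {A : Set S}, MeasurableSet A → ψ A = 0 →
        ∃ x : S, ∀ n : ℕ, kpow κ n x A = 0 := by
      intro A hA h
      rw [hψ_apply hA] at h
      rw [ENNReal.tsum_eq_zero] at h
      by_contra hc
      push_neg at hc
      have : Function.support (fun x => ∑' n : ℕ, kpow κ n x A) = Set.univ := by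
        ext x
        simp only [Function.mem_support, Set.mem_univ, iff_true]
        obtain ⟨n, hn⟩ := hc x
        intro h0
        rw [ENNReal.tsum_eq_zero] at h0
        exact hn (h0 n)
      have h1 : 0 < ∫⁻ x, ∑' n : ℕ, kpow κ n x A ∂φ₀ := by
        rw [lintegral_pos_iff_support
          (Measurable.ennreal_tsum fun n => kpow_coe_measurable κ n hA), this]
        exact pos_iff_ne_zero.mpr fun h0 => hne₀ (Measure.measure_univ_eq_zero.mp h0)
      rw [lintegral_tsum (fun n => (kpow_coe_measurable κ n hA).aemeasurable)] at h1
      exact h1.ne' (ENNReal.tsum_eq_zero.mpr h)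
    -- (1) ψ is an irreducibility measure
    have h1 : IsIrreducibilityMeasure κ ψ := by
      intro A hA hpos x
      have hB := hψ_pos hA hpos
      set B : Set S := {x : S | ∃ n : ℕ, 0 < kpow κ n x A} with hBdef
      have hBm : MeasurableSet B := by
        have : B = ⋃ n : ℕ, {x : S | 0 < kpow κ n x A} := by
          ext y; simp [hBdef]
        rw [this]
        exact MeasurableSet.iUnion fun n =>
          measurableSet_lt measurable_const (kpow_coe_measurable κ n hA)
      obtain ⟨m, hm1, hmx⟩ := hφ₀ B hBm hB x
      obtain ⟨n, hmn, hn⟩ := reach_trans κ hA hmx (fun y hy => hy)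
      exact ⟨n, le_trans hm1 hmn, hn⟩
    refine ⟨ψ, h1, ?_, ?_⟩
    · -- (2) maximality
      intro μ
      constructor
      · intro hμ
        refine Measure.AbsolutelyContinuous.mk fun A hA hA0 => ?_
        by_contra hc
        obtain ⟨x, hx⟩ := hψ_zero hA hA0
        obtain ⟨n, _, hn⟩ := hμ A hA (pos_iff_ne_zero.mpr hc) x
        exact hn.ne' (hx n)
      · intro hac A hA hpos x
        have : 0 < ψ A := by
          rcases eq_or_ne (ψ A) 0 with h | h
          · exact absurd (hac h) hpos.ne'
          · exact pos_iff_ne_zero.mpr h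
        exact h1 A hA this x
    · -- (3) the set of points reaching a ψ-null set is ψ-null
      intro A hA hA0
      set C : Set S := {x : S | ∃ n : ℕ, 1 ≤ n ∧ 0 < kpow κ n x A} with hCdef
      have hCm : MeasurableSet C := by
        have : C = ⋃ n : ℕ, ⋃ _ : 1 ≤ n, {x : S | 0 < kpow κ n x A} := by
          ext y; simp [hCdef]
        rw [this]
        exact MeasurableSet.iUnion fun n => MeasurableSet.iUnion fun _ =>
          measurableSet_lt measurable_const (kpow_coe_measurable κ n hA)
      by_contra hc
      have hCpos : 0 < ψ C := pos_iff_ne_zero.mpr hc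
      obtain ⟨x, hx⟩ := hψ_zero hA hA0
      -- from x, the set C is reached (since ψ C > 0 and ψ is irreducibility)
      obtain ⟨m, _, hmx⟩ := h1 C hCm hCpos x
      -- points of C reach A, so x reaches A: contradiction
      obtain ⟨n, _, hn⟩ := reach_trans κ hA hmx (fun y hy => ⟨hy.choose, hy.choose_spec.2⟩)
      exact hn.ne' (hx n)
  · -- no nonzero irreducibility measure: ψ = 0 works
    push_neg at hS
    refine ⟨0, ?_, ?_, ?_⟩
    · intro A hA hpos
      simp at hpos
    · intro μ
      constructor
      · intro hμ
        have : μ = 0 := by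
          by_contra h
          exact h (hS μ hμ)
        rw [this]
      · intro hac
        have hμ0 : μ = 0 := by
          rw [← Measure.measure_univ_eq_zero]
          exact hac (by simp)
        intro A hA hpos
        rw [hμ0] at hpos
        simp at hpos
    · intro A hA h
      simp
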